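/- arXiv:1505.06155 — 2 statements merged into one kernel-verified Lean document; each statement's English description precedes it below -/
import Mathlib

section
/- Let G and H be connected graphs, each with at least two vertices, having t₁ and t₂ true twin equivalence classes respectively. Then the vertex set of the strong product G ⊠ H is partitioned into exactly t₁·t₂ true twin equivalence classes, namely the sets U × U' where U is a true twin equivalence class of G and U' is a true twin equivalence class of H. -/
open SimpleGraph

/-- The strong product of two simple graphs. -/
def strongProd {α β : Type*} (G : SimpleGraph α) (H : SimpleGraph β) :
    SimpleGraph (α × β) where
  Adj x y := (x.1 = y.1 ∧ H.Adj x.2 y.2) ∨ (x.2 = y.2 ∧ G.Adj x.1 y.1) ∨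
      (G.Adj x.1 y.1 ∧ H.Adj x.2 y.2)
  symm := by
    constructor
    rintro x y (⟨h1, h2⟩ | ⟨h1, h2⟩ | ⟨h1, h2⟩)
    · exact Or.inl ⟨h1.symm, h2.symm⟩
    · exact Or.inr (Or.inl ⟨h1.symm, h2.symm⟩)
    · exact Or.inr (Or.inr ⟨h1.symm, h2.symm⟩)
  loopless := by
    constructor
    rintro x (⟨_, h⟩ | ⟨_, h⟩ | ⟨h, _⟩)
    · exact H.loopless.irrefl _ h
    · exact G.loopless.irrefl _ h
    · exact G.loopless.irrefl _ h

/-- A set `S` is a local metric generator for `G` if every pair of adjacent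
vertices is distinguished by some element of `S`. -/
def IsLocalMetricGenerator {α : Type*} (G : SimpleGraph α) (S : Set α) : Prop :=
  ∀ u v : α, G.Adj u v → ∃ s ∈ S, G.dist u s ≠ G.dist v s

/-- The local metric dimension of a graph. -/
noncomputable def localMetricDim {α : Type*} [Fintype α] (G : SimpleGraph α) : ℕ :=
  sInf {n | ∃ S : Finset α, S.card = n ∧ IsLocalMetricGenerator G ↑S}

/-- A set `S` is a metric generator for `G` if every pair of distinct
vertices is distinguished by some element of `S`. -/
def IsMetricGenerator {α : Type*} (G : SimpleGraph α) (S : Set α) : Prop :=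
  ∀ u v : α, u ≠ v → ∃ s ∈ S, G.dist u s ≠ G.dist v s

/-- The metric dimension of a graph. -/
noncomputable def metricDim {α : Type*} [Fintype α] (G : SimpleGraph α) : ℕ :=
  sInf {n | ∃ S : Finset α, S.card = n ∧ IsMetricGenerator G ↑S}

/-- The eccentricity of a vertex: the maximum distance to another vertex. -/
noncomputable def eccentricity {α : Type*} (G : SimpleGraph α) (v : α) : ℕ :=
  sSup {d | ∃ u, G.dist v u = d}

/-- The diameter of a graph: maximum eccentricity. -/
noncomputable def graphDiam {α : Type*} (G : SimpleGraph α) : ℕ :=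
  sSup {d | ∃ v, eccentricity G v = d}

/-- The radius of a graph: minimum eccentricity. -/
noncomputable def graphRadius {α : Type*} (G : SimpleGraph α) : ℕ :=
  sInf {d | ∃ v, eccentricity G v = d}

/-- The interval `I[x,y]`: vertices lying on some shortest `x`–`y` path. -/
def interval {α : Type*} (G : SimpleGraph α) (x y : α) : Set α :=
  {w | G.dist x w + G.dist w y = G.dist x y}

/-- A graph is adjacency `k`-resolved if for every pair of adjacent vertices
`x, y` there is a vertex `w` with `d(y,w) ≥ k` and `x ∈ I[y,w]`, or
`d(x,w) ≥ k` and `y ∈ I[x,w]`. -/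
def AdjKResolved {α : Type*} (G : SimpleGraph α) (k : ℕ) : Prop :=
  ∀ x y : α, G.Adj x y →
    ∃ w : α, (k ≤ G.dist y w ∧ x ∈ interval G y w) ∨
      (k ≤ G.dist x w ∧ y ∈ interval G x w)

/-- The true twin equivalence relation: `u ≈ v` iff `N[u] = N[v]`. -/
def trueTwinSetoid {α : Type*} (G : SimpleGraph α) : Setoid α where
  r u v := insert u (G.neighborSet u) = insert v (G.neighborSet v)
  iseqv := ⟨fun _ => rfl, Eq.symm, Eq.trans⟩

lemma closedNbhd {α β : Type*} (G : SimpleGraph α) (H : SimpleGraph β) (p : α × β) :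
    insert p ((strongProd G H).neighborSet p) =
      (insert p.1 (G.neighborSet p.1)) ×ˢ (insert p.2 (H.neighborSet p.2)) := by
  ext ⟨x, y⟩
  simp only [Set.mem_insert_iff, SimpleGraph.mem_neighborSet, strongProd, Set.mem_prod,
    Prod.mk.injEq, Prod.ext_iff, eq_comm]
  constructor
  · rintro (⟨h1, h2⟩ | ⟨h1, h2⟩ | ⟨h1, h2⟩ | ⟨h1, h2⟩)
    · exact ⟨Or.inl h1, Or.inl h2⟩
    · exact ⟨Or.inl h1, Or.inr h2⟩
    · exact ⟨Or.inr h2, Or.inl h1⟩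
    · exact ⟨Or.inr h1, Or.inr h2⟩
  · rintro ⟨(h1 | h1), (h2 | h2)⟩
    · exact Or.inl ⟨h1, h2⟩
    · exact Or.inr (Or.inl ⟨h1, h2⟩)
    · exact Or.inr (Or.inr (Or.inl ⟨h2, h1⟩))
    · exact Or.inr (Or.inr (Or.inr ⟨h1, h2⟩))

lemma setoid_eq {α β : Type*} (G : SimpleGraph α) (H : SimpleGraph β) :
    trueTwinSetoid (strongProd G H) = (trueTwinSetoid G).prod (trueTwinSetoid H) := by
  apply Setoid.ext
  intro p q
  show insert p _ = insert q _ ↔ _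
  rw [closedNbhd, closedNbhd]
  rw [Set.prod_eq_prod_iff_of_nonempty
    (((Set.insert_nonempty _ _)).prod (Set.insert_nonempty _ _))]
  rfl

lemma classes_prod {α β : Type*} (r : Setoid α) (s : Setoid β) :
    Setoid.classes (r.prod s) =
      {C | ∃ U ∈ Setoid.classes r, ∃ U' ∈ Setoid.classes s, C = U ×ˢ U'} := by
  ext C
  constructor
  · rintro ⟨⟨a, b⟩, rfl⟩
    refine ⟨{x | r x a}, Setoid.mem_classes r a, {x | s x b}, Setoid.mem_classes s b, ?_⟩
    ext ⟨x, y⟩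
    exact Iff.rfl
  · rintro ⟨U, ⟨a, rfl⟩, U', ⟨b, rfl⟩, rfl⟩
    refine ⟨(a, b), ?_⟩
    ext ⟨x, y⟩
    exact Iff.rfl

/-- the true twin equivalence classes of `G ⊠ H` are exactly the
products of classes of `G` with classes of `H`, and there are `t₁·t₂` of them. -/
theorem stmt4 {α β : Type*} [Fintype α] [Fintype β]
    (G : SimpleGraph α) (H : SimpleGraph β)
    (hG : G.Connected) (hH : H.Connected)
    (hn1 : 2 ≤ Fintype.card α) (hn2 : 2 ≤ Fintype.card β)
    (t1 t2 : ℕ)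
    (ht1 : Nat.card (Quotient (trueTwinSetoid G)) = t1)
    (ht2 : Nat.card (Quotient (trueTwinSetoid H)) = t2) :
    Setoid.classes (trueTwinSetoid (strongProd G H)) =
      {C | ∃ U ∈ Setoid.classes (trueTwinSetoid G),
        ∃ U' ∈ Setoid.classes (trueTwinSetoid H), C = U ×ˢ U'} ∧
    Nat.card (Quotient (trueTwinSetoid (strongProd G H))) = t1 * t2 := by
  constructor
  · rw [setoid_eq]
    exact classes_prod _ _
  · rw [setoid_eq, ← Nat.card_congr (Setoid.prodQuotientEquiv (trueTwinSetoid G)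
      (trueTwinSetoid H)), Nat.card_prod, ht1, ht2]
end

section
/- Let G and H be connected graphs, each with at least two vertices, with H bipartite. Let u₁, u₂, u₃ ∈ V(G) and v₁, v₂ ∈ V(H) be such that u₂ ∈ I_G[u₁, u₃], d_G(u₁, u₂) ≤ d_H(v₁, v₂) = D(H), and d_G(u₂, u₃) ≥ D(H), where D(H) is the diameter of H. Then for any shortest path P in G from u₁ to u₂, the set B = {(u₁,v₁), (u₂,v₂), (u₃,v₁)} resolves V(P) × V(H) in G ⊠ H; that is, for every pair of adjacent vertices (u_i, v_j), (u_k, v_l) of G ⊠ H with u_i, u_k ∈ V(P), there exists w ∈ B such that d_{G⊠H}(w, (u_i,v_j)) ≠ d_{G⊠H}(w, (u_k,v_l)). -/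
open SimpleGraph

namespace StrongAux

variable {α β : Type*} {G : SimpleGraph α} {H : SimpleGraph β}

def walkProd : ∀ {a c : α} {b d : β}, G.Walk a c → H.Walk b d →
    (strongProd G H).Walk (a, b) (c, d)
  | _, _, _, _, Walk.nil, Walk.nil => Walk.nil
  | a, _, _, _, Walk.nil, Walk.cons (v := v) h q =>
      Walk.cons (v := (a, v)) (Or.inl ⟨rfl, h⟩) (walkProd Walk.nil q)
  | _, _, b, _, Walk.cons (v := v) h p, Walk.nil =>
      Walk.cons (v := (v, b)) (Or.inr (Or.inl ⟨rfl, h⟩)) (walkProd p Walk.nil)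
  | _, _, _, _, Walk.cons (v := v) h p, Walk.cons (v := v') h' q =>
      Walk.cons (v := (v, v')) (Or.inr (Or.inr ⟨h, h'⟩)) (walkProd p q)
  termination_by a c b d p q => p.length + q.length
  decreasing_by all_goals simp [Walk.length_cons] <;> omega

lemma walkProd_length : ∀ {a c : α} {b d : β} (p : G.Walk a c) (q : H.Walk b d),
    (walkProd p q).length = max p.length q.length
  | _, _, _, _, Walk.nil, Walk.nil => by simp [walkProd]
  | a, _, _, _, Walk.nil, Walk.cons (v := v) h q => by
      simp [walkProd, walkProd_length Walk.nil q]
      change (walkProd Walk.nil q).length + 1 = _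
      rw [walkProd_length Walk.nil q]; simp
  | _, _, b, _, Walk.cons (v := v) h p, Walk.nil => by
      simp [walkProd, walkProd_length p Walk.nil]
      change (walkProd p Walk.nil).length + 1 = _
      rw [walkProd_length p Walk.nil]; simp
  | _, _, _, _, Walk.cons (v := v) h p, Walk.cons (v := v') h' q => by
      simp [walkProd, walkProd_length p q]
      change (walkProd p q).length + 1 = _
      rw [walkProd_length p q]
  termination_by a c b d p q => p.length + q.length

lemma dist_proj (hG : G.Connected) (hH : H.Connected) :
    ∀ {x y : α × β} (W : (strongProd G H).Walk x y),
      G.dist x.1 y.1 ≤ W.length ∧ H.dist x.2 y.2 ≤ W.length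
  | _, _, Walk.nil => by simp
  | x, y, @Walk.cons _ _ _ z _ h W => by
      obtain ⟨ih1, ih2⟩ := dist_proj hG hH W
      have t1 : G.dist x.1 y.1 ≤ G.dist x.1 z.1 + G.dist z.1 y.1 := hG.dist_triangle
      have t2 : H.dist x.2 y.2 ≤ H.dist x.2 z.2 + H.dist z.2 y.2 := hH.dist_triangle
      rcases h with ⟨h1, h2⟩ | ⟨h1, h2⟩ | ⟨h1, h2⟩
      · have e1 : G.dist x.1 z.1 = 0 := by rw [h1]; simp
        have e2 : H.dist x.2 z.2 = 1 := dist_eq_one_iff_adj.2 h2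
        change _ ≤ W.length + 1 ∧ _ ≤ W.length + 1; omega
      · have e1 : G.dist x.1 z.1 = 1 := dist_eq_one_iff_adj.2 h2
        have e2 : H.dist x.2 z.2 = 0 := by rw [h1]; simp
        change _ ≤ W.length + 1 ∧ _ ≤ W.length + 1; omega
      · have e1 : G.dist x.1 z.1 = 1 := dist_eq_one_iff_adj.2 h1
        have e2 : H.dist x.2 z.2 = 1 := dist_eq_one_iff_adj.2 h2
        change _ ≤ W.length + 1 ∧ _ ≤ W.length + 1; omega

lemma strongProd_dist (hG : G.Connected) (hH : H.Connected) (x y : α × β) :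
    (strongProd G H).dist x y = max (G.dist x.1 y.1) (H.dist x.2 y.2) := by
  obtain ⟨p, hp⟩ := hG.exists_walk_length_eq_dist x.1 y.1
  obtain ⟨q, hq⟩ := hH.exists_walk_length_eq_dist x.2 y.2
  have hw : (walkProd p q).length = max (G.dist x.1 y.1) (H.dist x.2 y.2) := by
    rw [walkProd_length, hp, hq]
  refine le_antisymm ?_ ?_
  · calc (strongProd G H).dist x y ≤ (walkProd p q).length := by
          have := dist_le (G := strongProd G H)
            ((walkProd p q).copy (Prod.mk.eta) (Prod.mk.eta))
          simpa using this
      _ = _ := hw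
  · have hreach : (strongProd G H).Reachable x y :=
      ⟨(walkProd p q).copy (Prod.mk.eta) (Prod.mk.eta)⟩
    obtain ⟨W, hW⟩ := hreach.exists_walk_length_eq_dist
    obtain ⟨d1, d2⟩ := dist_proj hG hH W
    rw [← hW]
    omega

end StrongAux

namespace StrongAux

variable {α β : Type*} {G : SimpleGraph α} {H : SimpleGraph β}

lemma fin2_aux {x y z : Fin 2} (h : x ≠ y) : (x = z ↔ ¬ y = z) := by
  have := x.isLt; have := y.isLt; have := z.isLt
  simp only [Fin.ext_iff] at *
  omega

lemma coloring_walk_parity (C : H.Coloring (Fin 2)) :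
    ∀ {u v : β} (W : H.Walk u v), (C u = C v ↔ Even W.length)
  | _, _, Walk.nil => by simp
  | u, v, @Walk.cons _ _ _ w _ h W => by
      have ih := coloring_walk_parity C W
      have hne : C u ≠ C w := C.valid h
      have h2 : C u = C v ↔ ¬ (C w = C v) := fin2_aux hne
      rw [Walk.length_cons, Nat.even_add_one, h2, not_iff_not, ih]

lemma dist_parity_ne (hH : H.Connected) (C : H.Coloring (Fin 2)) {b d : β}
    (hbd : H.Adj b d) (v : β) : H.dist v b ≠ H.dist v d := by
  obtain ⟨W1, h1⟩ := hH.exists_walk_length_eq_dist v b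
  obtain ⟨W2, h2⟩ := hH.exists_walk_length_eq_dist v d
  have p1 := coloring_walk_parity C W1
  have p2 := coloring_walk_parity C W2
  have hne : C b ≠ C d := C.valid hbd
  intro he
  rw [h1] at p1; rw [h2] at p2; rw [he] at p1
  have h3 : (C v = C b) ↔ (C v = C d) := p1.trans p2.symm
  have l1 := (C v).isLt; have l2 := (C b).isLt; have l3 := (C d).isLt
  simp only [Fin.ext_iff] at hne h3
  omega

lemma geodesic_mem [DecidableEq α] (hG : G.Connected) {u v a : α} (W : G.Walk u v)
    (hW : W.length = G.dist u v) (ha : a ∈ W.support) :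
    G.dist u a = (W.takeUntil a ha).length ∧
      G.dist a v = (W.dropUntil a ha).length ∧
      G.dist u a + G.dist a v = G.dist u v := by
  have hlen : (W.takeUntil a ha).length + (W.dropUntil a ha).length = W.length := by
    conv_rhs => rw [← W.take_spec ha]
    rw [Walk.length_append]
  have d1 : G.dist u a ≤ (W.takeUntil a ha).length := dist_le _
  have d2 : G.dist a v ≤ (W.dropUntil a ha).length := dist_le _
  have tri : G.dist u v ≤ G.dist u a + G.dist a v := hG.dist_triangle
  omega

lemma pos_ne [DecidableEq α] (hG : G.Connected) {u v a c : α} (W : G.Walk u v)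
    (hW : W.length = G.dist u v) (ha : a ∈ W.support) (hc : c ∈ W.support)
    (hne : a ≠ c) : G.dist u a ≠ G.dist u c := by
  have hsplit := W.take_spec hc
  have hc1 := geodesic_mem hG W hW hc
  have hpos : 0 < G.dist a c := hG.pos_dist_of_ne hne
  have hpos' : 0 < G.dist c a := hG.pos_dist_of_ne (Ne.symm hne)
  have ha' : a ∈ (W.takeUntil c hc).support ∨ a ∈ (W.dropUntil c hc).support := by
    rw [← Walk.mem_support_append_iff, hsplit]; exact ha
  rcases ha' with h | h
  · have htake : (W.takeUntil c hc).length = G.dist u c := hc1.1.symm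
    have := (geodesic_mem hG (W.takeUntil c hc) htake h).2.2
    omega
  · have hdrop : (W.dropUntil c hc).length = G.dist c v := hc1.2.1.symm
    have h1 := (geodesic_mem hG (W.dropUntil c hc) hdrop h).2.2
    have h2 := (geodesic_mem hG W hW ha).2.2
    omega

lemma dist_le_diam {β : Type*} {H : SimpleGraph β} [Fintype β] (v b : β) :
    H.dist v b ≤ graphDiam H := by
  have h1 : H.dist v b ≤ eccentricity H v :=
    le_csSup ((Set.finite_range (H.dist v)).bddAbove) ⟨b, rfl⟩
  have h2 : eccentricity H v ≤ graphDiam H :=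
    le_csSup ((Set.finite_range (eccentricity H)).bddAbove) ⟨v, rfl⟩
  omega

end StrongAux

/-- resolving triads.  If `u₂ ∈ I_G[u₁,u₃]`,
`d_G(u₁,u₂) ≤ d_H(v₁,v₂) = D(H)` and `d_G(u₂,u₃) ≥ D(H)`, then for any shortest
path `P` from `u₁` to `u₂`, the set `{(u₁,v₁),(u₂,v₂),(u₃,v₁)}` resolves
`V(P) × V(H)` in `G ⊠ H`. -/
theorem stmt14 {α β : Type*} [Fintype α] [Fintype β]
    (G : SimpleGraph α) (H : SimpleGraph β)
    (hG : G.Connected) (hH : H.Connected)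
    (hn1 : 2 ≤ Fintype.card α) (hn2 : 2 ≤ Fintype.card β)
    (hbip : H.Colorable 2)
    (u₁ u₂ u₃ : α) (v₁ v₂ : β)
    (hint : u₂ ∈ interval G u₁ u₃)
    (hd1 : G.dist u₁ u₂ ≤ H.dist v₁ v₂)
    (hd2 : H.dist v₁ v₂ = graphDiam H)
    (hd3 : graphDiam H ≤ G.dist u₂ u₃)
    (P : G.Walk u₁ u₂) (hP : P.IsPath) (hPlen : P.length = G.dist u₁ u₂) :
    ∀ x y : α × β, (strongProd G H).Adj x y →
      x.1 ∈ P.support → y.1 ∈ P.support →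
        ∃ w ∈ ({(u₁, v₁), (u₂, v₂), (u₃, v₁)} : Set (α × β)),
          (strongProd G H).dist w x ≠ (strongProd G H).dist w y := by
  classical
  rintro ⟨a, b⟩ ⟨c, d⟩ hadj ha hc
  obtain ⟨C⟩ := hbip
  simp only [interval, Set.mem_setOf_eq] at hint
  have key : ∀ z ∈ P.support, G.dist u₁ z + G.dist z u₂ = G.dist u₁ u₂ :=
    fun z hz => (StrongAux.geodesic_mem hG P hPlen hz).2.2
  have keyu3 : ∀ z ∈ P.support, G.dist u₃ z = G.dist z u₂ + G.dist u₂ u₃ := by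
    intro z hz
    have t1 : G.dist z u₃ ≤ G.dist z u₂ + G.dist u₂ u₃ := hG.dist_triangle
    have t2 : G.dist u₁ u₃ ≤ G.dist u₁ z + G.dist z u₃ := hG.dist_triangle
    have hk := key z hz
    have hcm : G.dist u₃ z = G.dist z u₃ := G.dist_comm
    omega
  have hdiam1 : ∀ b' : β, H.dist v₁ b' ≤ H.dist v₁ v₂ := by
    intro b'; rw [hd2]; exact StrongAux.dist_le_diam v₁ b'
  by_cases hac : a = c
  · subst hac
    have hbd : H.Adj b d := by
      rcases hadj with ⟨_, h2⟩ | ⟨_, h2⟩ | ⟨h1, _⟩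
      · exact h2
      · exact absurd h2 (G.loopless.irrefl a)
      · exact absurd h1 (G.loopless.irrefl a)
    by_contra hcon
    push_neg at hcon
    have h1 := hcon (u₁, v₁) (by simp)
    have h2 := hcon (u₂, v₂) (by simp)
    rw [StrongAux.strongProd_dist hG hH, StrongAux.strongProd_dist hG hH] at h1 h2
    simp only at h1 h2
    have hb1 : H.dist v₁ b ≠ H.dist v₁ d := StrongAux.dist_parity_ne hH C hbd v₁
    have hb2 : H.dist v₂ b ≠ H.dist v₂ d := StrongAux.dist_parity_ne hH C hbd v₂
    have tb : H.dist v₁ v₂ ≤ H.dist v₁ b + H.dist b v₂ := hH.dist_triangle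
    have td : H.dist v₁ v₂ ≤ H.dist v₁ d + H.dist d v₂ := hH.dist_triangle
    have cb : H.dist b v₂ = H.dist v₂ b := H.dist_comm
    have cd : H.dist d v₂ = H.dist v₂ d := H.dist_comm
    have ck : G.dist u₂ a = G.dist a u₂ := G.dist_comm
    have hk := key a ha
    omega
  · have hne1 : G.dist u₁ a ≠ G.dist u₁ c := StrongAux.pos_ne hG P hPlen ha hc hac
    have hka := key a ha
    have hkc := key c hc
    have h3a := keyu3 a ha
    have h3c := keyu3 c hc
    refine ⟨(u₃, v₁), by simp, ?_⟩
    rw [StrongAux.strongProd_dist hG hH, StrongAux.strongProd_dist hG hH]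
    simp only
    have hb1 : H.dist v₁ b ≤ H.dist v₁ v₂ := hdiam1 b
    have hb2 : H.dist v₁ d ≤ H.dist v₁ v₂ := hdiam1 d
    omega
end
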